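/- For integers J ≥ 2 and a probability density p on (0,∞) satisfying sup_{t>0} t·p(t) ≤ c₁·J, and for any r > 0, the integral ∫₀^∞ log|1 − y/r| · p(y) dy ≥ −4c₁ − (4c₁ + 1)·log J. -/

import Mathlib

open MeasureTheory intervalIntegral Set

lemma my_intInt_log {ε : ℝ} (h0 : 0 < ε) (h1 : ε ≤ 1) :
    IntervalIntegrable Real.log volume 0 ε := by
  rw [intervalIntegrable_iff_integrableOn_Ioc_of_le h0.le]
  have h : IntegrableOn (fun x : ℝ => -Real.log x) (Set.Ioc 0 ε) := by
    apply integrableOn_deriv_of_nonneg (g := fun x : ℝ => x - x * Real.log x)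
    · exact (continuous_id.sub Real.continuous_mul_log).continuousOn
    · intro x hx
      have : HasDerivAt (fun x : ℝ => x - x * Real.log x) (1 - (Real.log x + 1)) x :=
        (hasDerivAt_id x).sub (Real.hasDerivAt_mul_log hx.1.ne')
      convert this using 1; ring
    · intro x hx
      have : Real.log x ≤ 0 := Real.log_nonpos hx.1.le (hx.2.le.trans h1)
      linarith
  have h2 : Real.log = (fun x : ℝ => -(- Real.log x)) := by funext x; ring
  rw [h2]
  exact h.neg

lemma my_int_log_eq {ε : ℝ} (h0 : 0 < ε) (h1 : ε ≤ 1) :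
    ∫ x in (0:ℝ)..ε, Real.log x = ε * Real.log ε - ε := by
  have := intervalIntegral.integral_eq_sub_of_hasDeriv_right_of_le h0.le
    (f := fun x : ℝ => x * Real.log x - x) (f' := Real.log)
    ((Real.continuous_mul_log.sub continuous_id).continuousOn)
    (fun x hx => by
      have := (Real.hasDerivAt_mul_log hx.1.ne').sub (hasDerivAt_id x)
      have h2 : Real.log x + 1 - 1 = Real.log x := by ring
      rw [h2] at this
      exact this.hasDerivWithinAt)
    (my_intInt_log h0 h1)
  simpa using this

lemma my_intInt_log_neg {ε : ℝ} (h0 : 0 < ε) (h1 : ε ≤ 1) :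
    IntervalIntegrable Real.log volume (-ε) 0 := by
  rw [IntervalIntegrable.iff_comp_neg]
  simp only [Real.log_neg_eq_log, neg_neg, neg_zero]
  exact (my_intInt_log h0 h1).symm

lemma my_intInt_log_sym {ε : ℝ} (h0 : 0 < ε) (h1 : ε ≤ 1) :
    IntervalIntegrable Real.log volume (-ε) ε :=
  (my_intInt_log_neg h0 h1).trans (my_intInt_log h0 h1)

lemma my_int_log_sym {ε : ℝ} (h0 : 0 < ε) (h1 : ε ≤ 1) :
    ∫ x in (-ε)..ε, Real.log x = 2 * (ε * Real.log ε - ε) := by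
  have hadd := intervalIntegral.integral_add_adjacent_intervals
    (my_intInt_log_neg h0 h1) (my_intInt_log h0 h1) (f := Real.log)
  have hneg : ∫ x in (-ε)..(0:ℝ), Real.log x = ∫ x in (0:ℝ)..ε, Real.log x := by
    have : ∫ x in (-ε)..(0:ℝ), Real.log x = ∫ x in (-ε)..(0:ℝ), Real.log (-x) := by
      apply intervalIntegral.integral_congr; intro x _; simp [Real.log_neg_eq_log]
    rw [this, intervalIntegral.integral_comp_neg]
    norm_num
  rw [← hadd, hneg, my_int_log_eq h0 h1]; ring

set_option maxHeartbeats 1000000 in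
/-- lower bound on ∫ log|1 − y/r| p(y) dy for a density p on (0,∞)
with sup_{t>0} t·p(t) ≤ c₁ J. -/
theorem log_integral_lower_bound
    (J : ℕ) (hJ : 2 ≤ J) (c₁ : ℝ) (hc₁ : 0 < c₁)
    (p : ℝ → ℝ) (hpmeas : Measurable p) (hppos : ∀ t, 0 ≤ p t)
    (hpdens : ∫ t in Set.Ioi (0:ℝ), p t = 1)
    (hpsup : ∀ t > (0:ℝ), t * p t ≤ c₁ * J)
    (r : ℝ) (hr : 0 < r) :
    ∫ y in Set.Ioi (0:ℝ), Real.log |1 - y / r| * p y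
      ≥ -4 * c₁ - (4 * c₁ + 1) * Real.log J := by
  have hJ2 : (2:ℝ) ≤ (J:ℝ) := by exact_mod_cast hJ
  have hJ0 : (0:ℝ) < (J:ℝ) := by linarith
  set ε : ℝ := 1 / (J:ℝ) with hεdef
  have hε0 : 0 < ε := by positivity
  have hε2 : ε ≤ 1/2 := by
    rw [hεdef, div_le_div_iff₀ hJ0 (by norm_num)]; linarith
  have hlogε : Real.log ε = - Real.log J := by
    rw [hεdef, one_div, Real.log_inv]
  have hlogJ : 0 ≤ Real.log J := Real.log_nonneg (by linarith)
  clear_value ε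
  have ha : 0 < r * (1 - ε) := by nlinarith
  have hab : r * (1 - ε) ≤ r * (1 + ε) := by nlinarith
  -- rewrite |·| away
  simp only [Real.log_abs]
  -- interval integrability and value
  have h1 : IntervalIntegrable Real.log volume (-ε) ε :=
    my_intInt_log_sym hε0 (by linarith)
  have hgint : IntervalIntegrable (fun y => Real.log (1 - y / r)) volume
      (r * (1 - ε)) (r * (1 + ε)) := by
    have h3 := (h1.comp_sub_left 1).comp_mul_right (c := r⁻¹)
    have e1 : (1 - -ε) / r⁻¹ = r * (1 + ε) := by rw [div_eq_mul_inv, inv_inv]; ring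
    have e2 : (1 - ε) / r⁻¹ = r * (1 - ε) := by rw [div_eq_mul_inv, inv_inv]; ring
    rw [e1, e2] at h3
    simp only [div_eq_mul_inv]
    exact h3.symm
  have hgval : ∫ y in (r * (1 - ε))..(r * (1 + ε)), Real.log (1 - y / r)
      = 2 * r * (ε * Real.log ε - ε) := by
    rw [intervalIntegral.integral_comp_div (c := r)
      (f := fun x => Real.log (1 - x)) hr.ne']
    have e1 : r * (1 - ε) / r = 1 - ε := by field_simp
    have e2 : r * (1 + ε) / r = 1 + ε := by field_simp
    rw [e1, e2, intervalIntegral.integral_comp_sub_left (fun x => Real.log x) 1]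
    have e3 : (1:ℝ) - (1 + ε) = -ε := by ring
    have e4 : (1:ℝ) - (1 - ε) = ε := by ring
    rw [e3, e4, my_int_log_sym hε0 (by linarith), smul_eq_mul]; ring
  have hIccint : IntegrableOn (fun y => Real.log (1 - y / r))
      (Set.Icc (r * (1 - ε)) (r * (1 + ε))) := by
    rw [integrableOn_Icc_iff_integrableOn_Ioc]
    exact (intervalIntegrable_iff_integrableOn_Ioc_of_le hab).mp hgint
  have hIccval : ∫ y in Set.Icc (r * (1 - ε)) (r * (1 + ε)), Real.log (1 - y / r)
      = 2 * r * (ε * Real.log ε - ε) := by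
    rw [MeasureTheory.integral_Icc_eq_integral_Ioc,
      ← intervalIntegral.integral_of_le hab, hgval]
  -- p is integrable on (0, ∞)
  have hp_int : IntegrableOn p (Set.Ioi (0:ℝ)) := by
    by_contra h
    rw [MeasureTheory.integral_undef h] at hpdens
    norm_num at hpdens
  by_cases hf : IntegrableOn (fun y => Real.log (1 - y / r) * p y) (Set.Ioi (0:ℝ))
  swap
  · rw [MeasureTheory.integral_undef hf]
    nlinarith [mul_nonneg hc₁.le hlogJ]
  -- the lower bound function
  set C : ℝ := 2 * c₁ * J / r with hCdef
  have hC0 : 0 ≤ C := by rw [hCdef]; positivity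
  clear_value C
  have hh_int : IntegrableOn (fun y => -Real.log J * p y
      + C * (Set.Icc (r * (1 - ε)) (r * (1 + ε))).indicator
        (fun y => Real.log (1 - y / r)) y) (Set.Ioi (0:ℝ)) := by
    exact (hp_int.const_mul _).add
      (((hIccint.integrable_indicator measurableSet_Icc).const_mul _).integrableOn)
  have hsub : Set.Icc (r * (1 - ε)) (r * (1 + ε)) ⊆ Set.Ioi (0:ℝ) :=
    fun y hy => lt_of_lt_of_le ha hy.1
  have hle : ∀ y ∈ Set.Ioi (0:ℝ), (fun y => -Real.log J * p y
      + C * (Set.Icc (r * (1 - ε)) (r * (1 + ε))).indicator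
        (fun y => Real.log (1 - y / r)) y) y
      ≤ Real.log (1 - y / r) * p y := by
    intro y hy
    simp only [Set.mem_Ioi] at hy
    dsimp only
    by_cases hmem : y ∈ Set.Icc (r * (1 - ε)) (r * (1 + ε))
    · rw [Set.indicator_of_mem hmem]
      obtain ⟨hya, hyb⟩ := hmem
      have hpy : p y ≤ C := by
        rw [hCdef, le_div_iff₀ hr]
        have h5 := hpsup y hy
        have h6 : p y * r ≤ p y * (2 * y) :=
          mul_le_mul_of_nonneg_left (by nlinarith) (hppos y)
        nlinarith
      by_cases hyr : y = r
      · have h0 : 1 - y / r = 0 := by rw [hyr, div_self hr.ne', sub_self]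
        rw [h0, Real.log_zero]
        have := mul_nonneg hlogJ (hppos y)
        nlinarith
      · have hne : 1 - y / r ≠ 0 := by
          intro h
          apply hyr
          have : y / r = 1 := by linarith
          field_simp at this
          linarith
        have habs0 : 0 < |1 - y / r| := abs_pos.mpr hne
        have h6 : y / r ≤ 1 + ε := by rw [div_le_iff₀ hr]; nlinarith
        have h7 : 1 - ε ≤ y / r := by rw [le_div_iff₀ hr]; nlinarith
        have habsle : |1 - y / r| ≤ ε := abs_le.mpr ⟨by linarith, by linarith⟩
        have hX : Real.log (1 - y / r) ≤ -Real.log J := by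
          rw [← Real.log_abs, ← hlogε]
          exact Real.log_le_log habs0 habsle
        have hXneg : Real.log (1 - y / r) ≤ 0 := by linarith
        have key : 0 ≤ (-(Real.log (1 - y / r))) * (C - p y) :=
          mul_nonneg (by linarith) (by linarith)
        have key2 : 0 ≤ Real.log J * p y := mul_nonneg hlogJ (hppos y)
        nlinarith [key, key2]
    · rw [Set.indicator_of_notMem hmem]
      have hεabs : ε ≤ |1 - y / r| := by
        rcases lt_or_ge y (r * (1 - ε)) with h | h
        · have : ε < 1 - y / r := by
            rw [lt_sub_iff_add_lt, ← lt_sub_iff_add_lt']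
            rw [div_lt_iff₀ hr]
            nlinarith
          exact le_trans this.le (le_abs_self _)
        · have hby : r * (1 + ε) < y := by
            by_contra hcon
            exact hmem ⟨h, le_of_not_gt hcon⟩
          have : ε < -(1 - y / r) := by
            have : 1 + ε < y / r := by rw [lt_div_iff₀ hr]; nlinarith
            linarith
          exact le_trans this.le (neg_le_abs _)
      have hlb : -Real.log J ≤ Real.log (1 - y / r) := by
        rw [← Real.log_abs (1 - y / r), ← hlogε]
        exact Real.log_le_log hε0 hεabs
      have := mul_le_mul_of_nonneg_right hlb (hppos y)
      linarith
  have hmono := MeasureTheory.setIntegral_mono_on hh_int hf measurableSet_Ioi hle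
  -- compute the integral of the lower bound
  have hsplit : ∫ y in Set.Ioi (0:ℝ), (-Real.log J * p y
      + C * (Set.Icc (r * (1 - ε)) (r * (1 + ε))).indicator
        (fun y => Real.log (1 - y / r)) y)
      = -Real.log J * 1 + C * (2 * r * (ε * Real.log ε - ε)) := by
    rw [MeasureTheory.integral_add (hp_int.const_mul _)
      ((((hIccint.integrable_indicator measurableSet_Icc).const_mul _)).integrableOn),
      MeasureTheory.integral_const_mul, MeasureTheory.integral_const_mul, hpdens,
      MeasureTheory.setIntegral_indicator measurableSet_Icc,
      Set.inter_eq_self_of_subset_right hsub, hIccval]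
  have hval : C * (2 * r * (ε * Real.log ε - ε)) = -4 * c₁ * Real.log J - 4 * c₁ := by
    rw [hlogε, hCdef, hεdef]
    field_simp
    ring
  rw [hsplit, hval] at hmono
  linarith
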